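/- Let S, A be finite nonempty sets, r : S × A → ℝ, P : S × A → (S → ℝ) with P(s,a)(s') ≥ 0 and ∑_{s'} P(s,a)(s') = 1, π : S → (A → ℝ) with π(s)(a) > 0 and ∑_a π(s)(a) = 1, and let 0 ≤ γ < 1 and α ≥ 0. For a family Z : S × A → (Borel probability measures on ℝ), define the soft distributional Bellman operator (T_H^π Z)(s,a) = ∑_{s' ∈ S} ∑_{a' ∈ A} P(s,a)(s') · π(s')(a') · (f_{s,a,s',a'})_*(Z(s',a')), where f_{s,a,s',a'}(x) = r(s,a) + γ·(x − α·log π(s')(a')) and (f)_* denotes pushforward. Then for any two families Z₁, Z₂ such that every Z₁(s,a) and Z₂(s,a) has a finite first moment, one has the contraction max_{(s,a) ∈ S×A} d_e((T_H^π Z₁)(s,a), (T_H^π Z₂)(s,a)) ≤ γ · max_{(s,a) ∈ S×A} d_e(Z₁(s,a), Z₂(s,a)). -/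

import Mathlib

open MeasureTheory ProbabilityTheory Filter
open scoped ENNReal Topology

/-- The energy distance (squared Cramér distance) between two measures on `ℝ`. -/
noncomputable def energyDist (μ ν : Measure ℝ) : ℝ≥0∞ :=
  ∫⁻ x, ENNReal.ofReal ((cdf μ x - cdf ν x) ^ 2)

/-- The soft distributional Bellman operator: `(T_H^π Z)(s,a)` is the mixture over
successor pairs `(s',a')` of the pushforward of `Z(s',a')` under
`x ↦ r(s,a) + γ(x − α log π(s')(a'))`. -/
noncomputable def softDistBellman {S A : Type*} [Fintype S] [Fintype A]
    (r : S × A → ℝ) (P : S × A → S → ℝ) (pol : S → A → ℝ) (γ α : ℝ)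
    (Z : S × A → Measure ℝ) : S × A → Measure ℝ := fun p =>
  ∑ s' : S, ∑ a' : A,
    ENNReal.ofReal (P p s' * pol s' a') •
      Measure.map (fun x => r p + γ * (x - α * Real.log (pol s' a'))) (Z (s', a'))

section Aux

open Set

lemma measurable_cdf' (μ : Measure ℝ) : Measurable (cdf μ) :=
  (cdf μ).mono.measurable

/-- cdf of an affine (increasing) pushforward. -/
lemma cdf_map_affine (μ : Measure ℝ) [IsProbabilityMeasure μ] (c γ : ℝ) (hγ : 0 < γ) (x : ℝ) :
    cdf (Measure.map (fun y => c + γ * y) μ) x = cdf μ ((x - c) / γ) := by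
  have hmeas : Measurable (fun y : ℝ => c + γ * y) := by fun_prop
  have : IsProbabilityMeasure (Measure.map (fun y => c + γ * y) μ) :=
    Measure.isProbabilityMeasure_map hmeas.aemeasurable
  have hset : (fun y : ℝ => c + γ * y) ⁻¹' Iic x = Iic ((x - c) / γ) := by
    ext y
    simp only [mem_preimage, mem_Iic, le_div_iff₀ hγ]
    constructor <;> intro h <;> nlinarith
  rw [cdf_eq_real, cdf_eq_real, measureReal_def, measureReal_def, Measure.map_apply hmeas measurableSet_Iic, hset]

/-- Change of variables for the Lebesgue integral against an affine map. -/
lemma lintegral_comp_affine (g : ℝ → ℝ≥0∞) (hg : Measurable g) (c γ : ℝ) (hγ : 0 < γ) :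
    ∫⁻ x, g ((x - c) / γ) = ENNReal.ofReal γ * ∫⁻ x, g x := by
  have hφ : Measurable (fun x : ℝ => (x - c) / γ) := by fun_prop
  have hmap : Measure.map (fun x : ℝ => (x - c) / γ) volume = ENNReal.ofReal γ • volume := by
    have h2 : (fun x : ℝ => (x - c) / γ) =
        (fun y : ℝ => y + (-(c / γ))) ∘ (fun x : ℝ => γ⁻¹ * x) := by
      funext x
      simp only [Function.comp_apply]
      field_simp
      ring
    rw [h2, ← Measure.map_map (by fun_prop) (by fun_prop),
      Real.map_volume_mul_left (inv_ne_zero (ne_of_gt hγ)), inv_inv, abs_of_pos hγ,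
      Measure.map_smul, map_add_right_eq_self]
  calc ∫⁻ x, g ((x - c) / γ)
      = ∫⁻ y, g y ∂(Measure.map (fun x : ℝ => (x - c) / γ) volume) :=
        (lintegral_map hg hφ).symm
    _ = ENNReal.ofReal γ * ∫⁻ x, g x := by rw [hmap, lintegral_smul_measure, smul_eq_mul]

/-- Energy distance scales by `γ` under a common affine pushforward with slope `γ > 0`. -/
lemma energyDist_map_affine (μ ν : Measure ℝ) [IsProbabilityMeasure μ] [IsProbabilityMeasure ν]
    (c γ : ℝ) (hγ : 0 < γ) :
    energyDist (Measure.map (fun y => c + γ * y) μ) (Measure.map (fun y => c + γ * y) ν)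
      = ENNReal.ofReal γ * energyDist μ ν := by
  unfold energyDist
  simp_rw [cdf_map_affine _ c γ hγ]
  exact lintegral_comp_affine (fun y => ENNReal.ofReal ((cdf μ y - cdf ν y) ^ 2))
    (ENNReal.measurable_ofReal.comp (((measurable_cdf' μ).sub (measurable_cdf' ν)).pow_const 2))
    c γ hγ

/-- cdf of a finite mixture of probability measures. -/
lemma cdf_finsum {ι : Type*} [Fintype ι] (w : ι → ℝ) (hw0 : ∀ i, 0 ≤ w i) (hw1 : ∑ i, w i = 1)
    (μ : ι → Measure ℝ) [∀ i, IsProbabilityMeasure (μ i)] (x : ℝ) :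
    cdf (∑ i, ENNReal.ofReal (w i) • μ i) x = ∑ i, w i * cdf (μ i) x := by
  have happly : ∀ s : Set ℝ, MeasurableSet s →
      (∑ i, ENNReal.ofReal (w i) • μ i) s = ∑ i, ENNReal.ofReal (w i) * μ i s := by
    intro s _
    rw [Measure.finset_sum_apply]
    rfl
  have hprob : IsProbabilityMeasure (∑ i, ENNReal.ofReal (w i) • μ i) := by
    constructor
    rw [happly _ MeasurableSet.univ]
    simp only [measure_univ, mul_one]
    rw [← ENNReal.ofReal_sum_of_nonneg (fun i _ => hw0 i), hw1, ENNReal.ofReal_one]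
  rw [cdf_eq_real, measureReal_def, happly _ measurableSet_Iic,
    ENNReal.toReal_sum (fun i _ => by
      exact ENNReal.mul_ne_top ENNReal.ofReal_ne_top (measure_ne_top _ _))]
  refine Finset.sum_congr rfl fun i _ => ?_
  rw [ENNReal.toReal_mul, ENNReal.toReal_ofReal (hw0 i), cdf_eq_real, measureReal_def]

/-- Weighted Jensen inequality for squares. -/
lemma weighted_jensen_sq {ι : Type*} [Fintype ι] (w d : ι → ℝ) (hw0 : ∀ i, 0 ≤ w i)
    (hw1 : ∑ i, w i = 1) : (∑ i, w i * d i) ^ 2 ≤ ∑ i, w i * d i ^ 2 := by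
  have h := Finset.sum_mul_sq_le_sq_mul_sq Finset.univ (fun i => Real.sqrt (w i))
      (fun i => Real.sqrt (w i) * d i)
  calc (∑ i, w i * d i) ^ 2
      = (∑ i, Real.sqrt (w i) * (Real.sqrt (w i) * d i)) ^ 2 := by
        congr 1
        exact Finset.sum_congr rfl fun i _ => by
          rw [← mul_assoc, Real.mul_self_sqrt (hw0 i)]
    _ ≤ (∑ i, Real.sqrt (w i) ^ 2) * ∑ i, (Real.sqrt (w i) * d i) ^ 2 := h
    _ = ∑ i, w i * d i ^ 2 := by
        simp_rw [mul_pow, Real.sq_sqrt (hw0 _)]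
        rw [hw1, one_mul]

end Aux

/-- The soft distributional Bellman operator is a `γ`-contraction in the supremal
energy distance. -/
theorem softDistBellman_contraction {S A : Type*}
    [Fintype S] [Fintype A] [Nonempty S] [Nonempty A]
    (r : S × A → ℝ) (P : S × A → S → ℝ) (pol : S → A → ℝ)
    (hP0 : ∀ p s', 0 ≤ P p s') (hP1 : ∀ p, ∑ s', P p s' = 1)
    (hpol0 : ∀ s a, 0 < pol s a) (hpol1 : ∀ s, ∑ a, pol s a = 1)
    (γ α : ℝ) (hγ0 : 0 ≤ γ) (hγ1 : γ < 1) (hα : 0 ≤ α)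
    (Z₁ Z₂ : S × A → Measure ℝ)
    [∀ p, IsProbabilityMeasure (Z₁ p)] [∀ p, IsProbabilityMeasure (Z₂ p)]
    (hZ₁ : ∀ p, Integrable (fun x : ℝ => x) (Z₁ p))
    (hZ₂ : ∀ p, Integrable (fun x : ℝ => x) (Z₂ p)) :
    (⨆ p : S × A, energyDist (softDistBellman r P pol γ α Z₁ p)
        (softDistBellman r P pol γ α Z₂ p)) ≤
      ENNReal.ofReal γ * ⨆ p : S × A, energyDist (Z₁ p) (Z₂ p) := by
  set M := ⨆ p : S × A, energyDist (Z₁ p) (Z₂ p) with hM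
  apply iSup_le
  intro p
  rcases eq_or_lt_of_le hγ0 with hγz | hγpos
  · -- γ = 0 : both sides of the operator coincide
    have h0 : softDistBellman r P pol γ α Z₁ p = softDistBellman r P pol γ α Z₂ p := by
      unfold softDistBellman
      refine Finset.sum_congr rfl fun s' _ => Finset.sum_congr rfl fun a' _ => ?_
      have hf : (fun x : ℝ => r p + γ * (x - α * Real.log (pol s' a'))) =
          fun _ : ℝ => r p := by
        funext x; rw [← hγz]; ring
      rw [hf, Measure.map_const, Measure.map_const, measure_univ, measure_univ]
    rw [h0]
    have : energyDist (softDistBellman r P pol γ α Z₂ p)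
        (softDistBellman r P pol γ α Z₂ p) = 0 := by
      unfold energyDist
      simp
    rw [this]
    exact zero_le
  · -- γ > 0
    -- weights and shifts
    set W : S × A → ℝ := fun q => P p q.1 * pol q.1 q.2 with hWdef
    set C : S × A → ℝ := fun q => r p - γ * (α * Real.log (pol q.1 q.2)) with hCdef
    have hW0 : ∀ q, 0 ≤ W q := fun q => mul_nonneg (hP0 p q.1) (hpol0 q.1 q.2).le
    have hW1 : ∑ q : S × A, W q = 1 := by
      rw [Fintype.sum_prod_type]
      have : ∀ s' : S, ∑ a' : A, W (s', a') = P p s' := by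
        intro s'
        simp only [hWdef]
        rw [← Finset.mul_sum, hpol1 s', mul_one]
      simp_rw [this]
      exact hP1 p
    have hfun : ∀ q : S × A, (fun x : ℝ => r p + γ * (x - α * Real.log (pol q.1 q.2))) =
        fun x : ℝ => C q + γ * x := by
      intro q; funext x; simp only [hCdef]; ring
    have hflat : ∀ Z : S × A → Measure ℝ, softDistBellman r P pol γ α Z p =
        ∑ q : S × A, ENNReal.ofReal (W q) • Measure.map (fun x => C q + γ * x) (Z q) := by
      intro Z
      unfold softDistBellman
      rw [Fintype.sum_prod_type]
      refine Finset.sum_congr rfl fun s' _ => Finset.sum_congr rfl fun a' _ => ?_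
      have h1 : ENNReal.ofReal (P p s' * pol s' a') = ENNReal.ofReal (W (s', a')) := rfl
      have h2 : (fun x : ℝ => r p + γ * (x - α * Real.log (pol s' a'))) =
          fun x : ℝ => C (s', a') + γ * x := by
        funext x; simp only [hCdef]; ring
      rw [h1, h2]
    have hmeas : Measurable (fun x : ℝ => C (Classical.arbitrary _) + γ * x) := by fun_prop
    have hinst₁ : ∀ q : S × A, IsProbabilityMeasure
        (Measure.map (fun x => C q + γ * x) (Z₁ q)) := fun q =>
      Measure.isProbabilityMeasure_map (by fun_prop)
    have hinst₂ : ∀ q : S × A, IsProbabilityMeasure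
        (Measure.map (fun x => C q + γ * x) (Z₂ q)) := fun q =>
      Measure.isProbabilityMeasure_map (by fun_prop)
    -- cdf of the two mixtures
    have hc₁ : ∀ x, cdf (softDistBellman r P pol γ α Z₁ p) x =
        ∑ q : S × A, W q * cdf (Z₁ q) ((x - C q) / γ) := by
      intro x
      rw [hflat Z₁, cdf_finsum W hW0 hW1 _ x]
      exact Finset.sum_congr rfl fun q _ => by rw [cdf_map_affine _ _ _ hγpos]
    have hc₂ : ∀ x, cdf (softDistBellman r P pol γ α Z₂ p) x =
        ∑ q : S × A, W q * cdf (Z₂ q) ((x - C q) / γ) := by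
      intro x
      rw [hflat Z₂, cdf_finsum W hW0 hW1 _ x]
      exact Finset.sum_congr rfl fun q _ => by rw [cdf_map_affine _ _ _ hγpos]
    -- pointwise difference of cdfs
    set D : S × A → ℝ → ℝ :=
      fun q x => cdf (Z₁ q) ((x - C q) / γ) - cdf (Z₂ q) ((x - C q) / γ) with hDdef
    have hDmeas : ∀ q, Measurable (fun x => ENNReal.ofReal (D q x ^ 2)) := by
      intro q
      refine ENNReal.measurable_ofReal.comp (Measurable.pow_const ?_ 2)
      exact ((measurable_cdf' (Z₁ q)).comp (by fun_prop)).sub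
        ((measurable_cdf' (Z₂ q)).comp (by fun_prop))
    calc energyDist (softDistBellman r P pol γ α Z₁ p) (softDistBellman r P pol γ α Z₂ p)
        = ∫⁻ x, ENNReal.ofReal ((∑ q : S × A, W q * D q x) ^ 2) := by
          unfold energyDist
          congr 1
          funext x
          rw [hc₁ x, hc₂ x, ← Finset.sum_sub_distrib]
          congr 2
          exact Finset.sum_congr rfl fun q _ => by rw [hDdef]; ring
      _ ≤ ∫⁻ x, ∑ q : S × A, ENNReal.ofReal (W q) * ENNReal.ofReal (D q x ^ 2) := by
          refine lintegral_mono fun x => ?_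
          calc ENNReal.ofReal ((∑ q : S × A, W q * D q x) ^ 2)
              ≤ ENNReal.ofReal (∑ q : S × A, W q * D q x ^ 2) :=
                ENNReal.ofReal_le_ofReal (weighted_jensen_sq W (fun q => D q x) hW0 hW1)
            _ = ∑ q : S × A, ENNReal.ofReal (W q) * ENNReal.ofReal (D q x ^ 2) := by
                rw [ENNReal.ofReal_sum_of_nonneg
                  (fun q _ => mul_nonneg (hW0 q) (sq_nonneg _))]
                exact Finset.sum_congr rfl fun q _ =>
                  ENNReal.ofReal_mul (hW0 q)
      _ = ∑ q : S × A, ENNReal.ofReal (W q) * ∫⁻ x, ENNReal.ofReal (D q x ^ 2) := by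
          rw [lintegral_finset_sum _ (fun q _ => (hDmeas q).const_mul _)]
          exact Finset.sum_congr rfl fun q _ => lintegral_const_mul _ (hDmeas q)
      _ = ∑ q : S × A, ENNReal.ofReal (W q) * (ENNReal.ofReal γ * energyDist (Z₁ q) (Z₂ q)) := by
          refine Finset.sum_congr rfl fun q _ => ?_
          congr 1
          have := energyDist_map_affine (Z₁ q) (Z₂ q) (C q) γ hγpos
          rw [← this]
          unfold energyDist
          congr 1
          funext x
          rw [cdf_map_affine _ _ _ hγpos, cdf_map_affine _ _ _ hγpos]
      _ ≤ ∑ q : S × A, ENNReal.ofReal (W q) * (ENNReal.ofReal γ * M) := by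
          refine Finset.sum_le_sum fun q _ => ?_
          have hle : energyDist (Z₁ q) (Z₂ q) ≤ M :=
            le_iSup (fun p : S × A => energyDist (Z₁ p) (Z₂ p)) q
          exact mul_le_mul_right (mul_le_mul_right hle _) _
      _ = ENNReal.ofReal γ * M := by
          rw [← Finset.sum_mul, ← ENNReal.ofReal_sum_of_nonneg (fun q _ => hW0 q), hW1,
            ENNReal.ofReal_one, one_mul]
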